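/- arXiv:1807.00540 — 2 statements merged into one kernel-verified Lean document; each statement's English description precedes it below -/
import Mathlib

section
/- Let 0 < q₁, q₂ ≤ ∞ and s₁, s₂ ∈ ℝ. The embedding l^{q₁}_{s₁}(ℤⁿ) ⊆ l^{q₂}_{s₂}(ℤⁿ) (i.e., there is a constant C such that ‖a‖_{l^{q₂}_{s₂}} ≤ C‖a‖_{l^{q₁}_{s₁}} for all sequences a : ℤⁿ → ℂ) holds if and only if either (1/q₂ ≤ 1/q₁ and s₂ ≤ s₁), or (1/q₂ > 1/q₁ and 1/q₂ + s₂/n < 1/q₁ + s₁/n). -/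
open scoped ENNReal NNReal

/-- The Japanese bracket `⟨k⟩ = (1+|k|²)^{1/2}` for `k ∈ ℤⁿ`. -/
noncomputable def jpw {n : ℕ} (k : Fin n → ℤ) : ℝ :=
  (1 + ∑ i, ((k i : ℝ)) ^ 2) ^ ((1 : ℝ) / 2)

noncomputable def W {n : ℕ} (s : ℝ) (k : Fin n → ℤ) : ℝ≥0∞ :=
  ENNReal.ofReal (jpw k ^ s)

lemma one_le_jpw {n : ℕ} (k : Fin n → ℤ) : 1 ≤ jpw k := by
  have h : (1:ℝ) ≤ 1 + ∑ i, ((k i : ℝ)) ^ 2 := le_add_of_nonneg_right (by positivity)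
  calc (1:ℝ) = 1 ^ ((1:ℝ)/2) := by rw [Real.one_rpow]
  _ ≤ _ := Real.rpow_le_rpow zero_le_one h (by norm_num)

lemma jpw_pos {n : ℕ} (k : Fin n → ℤ) : 0 < jpw k := lt_of_lt_of_le one_pos (one_le_jpw k)

lemma jpw_rpow_pos {n : ℕ} (k : Fin n → ℤ) (s : ℝ) : 0 < jpw k ^ s :=
  Real.rpow_pos_of_pos (jpw_pos k) s

lemma W_pos {n : ℕ} (s : ℝ) (k : Fin n → ℤ) : 0 < W s k := by
  simp [W, ENNReal.ofReal_pos, jpw_rpow_pos]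

lemma W_ne_top {n : ℕ} (s : ℝ) (k : Fin n → ℤ) : W s k ≠ ⊤ := ENNReal.ofReal_ne_top

lemma W_zero {n : ℕ} (k : Fin n → ℤ) : W 0 k = 1 := by
  simp [W, Real.rpow_zero]

lemma W_mul {n : ℕ} (a b : ℝ) (k : Fin n → ℤ) : W a k * W b k = W (a + b) k := by
  rw [W, W, W, ← ENNReal.ofReal_mul (jpw_rpow_pos k a).le, ← Real.rpow_add (jpw_pos k)]

lemma W_rpow {n : ℕ} (s p : ℝ) (k : Fin n → ℤ) : (W s k) ^ p = W (s * p) k := by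
  rw [W, W, ENNReal.ofReal_rpow_of_pos (jpw_rpow_pos k s), ← Real.rpow_mul (jpw_pos k).le]

lemma W_mono {n : ℕ} {a b : ℝ} (h : a ≤ b) (k : Fin n → ℤ) : W a k ≤ W b k :=
  ENNReal.ofReal_le_ofReal (Real.rpow_le_rpow_of_exponent_le (one_le_jpw k) h)

lemma jpw_le_of_forall_le {n : ℕ} {k : Fin n → ℤ} {m : ℕ} (hm : 1 ≤ m)
    (h : ∀ i, |(k i : ℝ)| ≤ m) : jpw k ≤ ((1:ℝ) + n) ^ ((1:ℝ)/2) * m := by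
  have h1 : (1:ℝ) + ∑ i, ((k i : ℝ)) ^ 2 ≤ (1 + n) * (m:ℝ)^2 := by
    have : ∑ i, ((k i : ℝ)) ^ 2 ≤ ∑ _i : Fin n, (m:ℝ)^2 := by
      apply Finset.sum_le_sum
      intro i _
      calc ((k i : ℝ))^2 = |(k i : ℝ)|^2 := (sq_abs _).symm
      _ ≤ (m:ℝ)^2 := by
        apply sq_le_sq' _ (h i)
        nlinarith [abs_nonneg ((k i : ℝ)), h i]
    have hm2 : (1:ℝ) ≤ (m:ℝ)^2 := by
      have : (1:ℝ) ≤ (m:ℝ) := by exact_mod_cast hm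
      nlinarith
    simp only [Finset.sum_const, Finset.card_univ, Fintype.card_fin, nsmul_eq_mul] at this
    nlinarith
  calc jpw k ≤ ((1 + n) * (m:ℝ)^2) ^ ((1:ℝ)/2) :=
        Real.rpow_le_rpow (by positivity) h1 (by norm_num)
  _ = ((1:ℝ) + n) ^ ((1:ℝ)/2) * ((m:ℝ)^2) ^ ((1:ℝ)/2) := Real.mul_rpow (by positivity) (by positivity)
  _ = ((1:ℝ) + n) ^ ((1:ℝ)/2) * m := by
      congr 1
      rw [← Real.rpow_natCast (m:ℝ) 2, ← Real.rpow_mul (by positivity)]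
      norm_num

lemma abs_le_jpw {n : ℕ} (k : Fin n → ℤ) (i : Fin n) : |(k i : ℝ)| ≤ jpw k := by
  have h1 : |(k i : ℝ)| = (((k i:ℝ))^2) ^ ((1:ℝ)/2) := by
    rw [← sq_abs, ← Real.rpow_natCast |(k i:ℝ)| 2, ← Real.rpow_mul (abs_nonneg _)]
    norm_num
  rw [h1]
  apply Real.rpow_le_rpow (by positivity) _ (by norm_num)
  have : ((k i:ℝ))^2 ≤ ∑ j, ((k j : ℝ))^2 :=
    Finset.single_le_sum (f := fun j => ((k j:ℝ))^2) (fun j _ => by positivity) (Finset.mem_univ i)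
  linarith

open scoped ENNReal
lemma tsum_pi_prod (g : ℤ → ℝ≥0∞) : ∀ (n : ℕ),
    ∑' k : Fin n → ℤ, ∏ i, g (k i) = (∑' m : ℤ, g m) ^ n := by
  intro n
  induction n with
  | zero =>
    rw [pow_zero]
    rw [tsum_eq_single (fun (i : Fin 0) => (0:ℤ)) (fun b hb => absurd (funext fun i => i.elim0) hb)]
    simp
  | succ n ih =>
    rw [← (Fin.consEquiv (fun _ : Fin (n+1) => ℤ)).tsum_eq]
    have : ∀ p : ℤ × (Fin n → ℤ),
        (∏ i, g ((Fin.consEquiv (fun _ : Fin (n+1) => ℤ)) p i)) = g p.1 * ∏ i, g (p.2 i) := by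
      intro p
      rw [Fin.prod_univ_succ]
      simp [Fin.consEquiv]
    rw [tsum_congr this, ENNReal.tsum_prod']
    simp_rw [ENNReal.tsum_mul_left, ENNReal.tsum_mul_right]
    rw [ih, pow_succ, mul_comm]

lemma summable_max_rpow {r : ℝ} (hr : 1 < r) :
    Summable (fun m : ℤ => (max 1 |(m:ℝ)|) ^ (-r)) := by
  have hs : Summable (fun m : ℤ => (2:ℝ)^r * (1 / |(m:ℝ) + 1/2| ^ r)) :=
    ((Real.summable_one_div_int_add_rpow (1/2) r).mpr hr).mul_left _
  apply hs.of_nonneg_of_le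
  · intro m; positivity
  · intro m
    have h1 : (0:ℝ) < max 1 |(m:ℝ)| := lt_max_of_lt_left one_pos
    have h2 : |(m:ℝ) + 1/2| ≤ 2 * max 1 |(m:ℝ)| := by
      have ha := abs_add_le (m:ℝ) (1/2)
      have hb : |(1/2:ℝ)| = 1/2 := by norm_num
      have hc : |(m:ℝ)| ≤ max 1 |(m:ℝ)| := le_max_right _ _
      have hd : (1:ℝ) ≤ max 1 |(m:ℝ)| := le_max_left _ _
      linarith
    have h3 : (0:ℝ) < |(m:ℝ) + 1/2| := by
      rcases le_or_gt 0 (m:ℝ) with h | h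
      · rw [abs_of_nonneg (by linarith)]; linarith
      · have : (m:ℝ) ≤ -1 := by exact_mod_cast Int.le_of_lt_add_one (by exact_mod_cast h)
        rw [abs_of_nonpos (by linarith)]; linarith
    -- (max)^(-r) ≤ 2^r / |m+1/2|^r
    have h4 : max 1 |(m:ℝ)| ≥ |(m:ℝ) + 1/2| / 2 := by linarith
    calc (max 1 |(m:ℝ)|) ^ (-r) ≤ (|(m:ℝ) + 1/2| / 2) ^ (-r) :=
          Real.rpow_le_rpow_of_nonpos (by positivity) h4 (by linarith)
    _ = |(m:ℝ) + 1/2| ^ (-r) / (2:ℝ) ^ (-r) := Real.div_rpow h3.le (by norm_num : (0:ℝ) ≤ 2) (-r)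
    _ = (2:ℝ)^r * (1 / |(m:ℝ) + 1/2| ^ r) := by
        rw [Real.rpow_neg h3.le, Real.rpow_neg (by norm_num : (0:ℝ) ≤ 2)]
        have hy : (0:ℝ) < |(m:ℝ) + 1/2| ^ r := by positivity
        have h2r : (0:ℝ) < (2:ℝ) ^ r := by positivity
        field_simp

lemma tsum_W_ne_top {n : ℕ} (hn : 0 < n) {t : ℝ} (ht : (n:ℝ) < t) :
    ∑' k : Fin n → ℤ, W (-t) k ≠ ⊤ := by
  set r : ℝ := t / n with hr
  have hr1 : 1 < r := (one_lt_div (by exact_mod_cast hn)).mpr ht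
  set g : ℤ → ℝ≥0∞ := fun m => ENNReal.ofReal ((max 1 |(m:ℝ)|) ^ (-r)) with hg
  have hbound : ∀ k : Fin n → ℤ, W (-t) k ≤ ∏ i, g (k i) := by
    intro k
    have hjr : ∀ i : Fin n, (max 1 |(k i : ℝ)|) ^ (-r) ≥ jpw k ^ (-r) := by
      intro i
      apply Real.rpow_le_rpow_of_nonpos (lt_max_of_lt_left one_pos) _ (by linarith)
      exact max_le (one_le_jpw k) (abs_le_jpw k i)
    have hprod : jpw k ^ (-t) ≤ ∏ i, (max 1 |(k i : ℝ)|) ^ (-r) := by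
      calc jpw k ^ (-t) = ∏ _i : Fin n, jpw k ^ (-r) := by
            rw [Finset.prod_const, Finset.card_univ, Fintype.card_fin,
              ← Real.rpow_natCast (jpw k ^ (-r)) n, ← Real.rpow_mul (jpw_pos k).le]
            congr 1
            rw [hr, neg_mul, div_mul_cancel₀ t (by exact_mod_cast hn.ne')]
      _ ≤ _ := Finset.prod_le_prod (fun i _ => (jpw_rpow_pos k (-r)).le) (fun i _ => hjr i)
    calc W (-t) k ≤ ENNReal.ofReal (∏ i, (max 1 |(k i : ℝ)|) ^ (-r)) :=
          ENNReal.ofReal_le_ofReal hprod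
    _ = ∏ i, g (k i) := by
        rw [← ENNReal.ofReal_prod_of_nonneg]
        intro i _; positivity
  have hgsum : ∑' m : ℤ, g m ≠ ⊤ := by
    rw [hg, ← ENNReal.ofReal_tsum_of_nonneg (fun m => by positivity) (summable_max_rpow hr1)]
    exact ENNReal.ofReal_ne_top
  have hle : ∑' k : Fin n → ℤ, W (-t) k ≤ (∑' m : ℤ, g m) ^ n :=
    (ENNReal.tsum_le_tsum hbound).trans_eq (tsum_pi_prod g n)
  exact ne_top_of_le_ne_top (ENNReal.pow_ne_top hgsum) hle

/-- The slab finset: first coordinate equal to `m`, others in `[0, m)`. -/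
noncomputable def slab (N : ℕ) (m : ℕ) : Finset (Fin (N+1) → ℤ) :=
  Fintype.piFinset (fun i => if i = 0 then ({(m:ℤ)} : Finset ℤ) else Finset.Ico 0 (m:ℤ))

lemma slab_card (N m : ℕ) : (slab N m).card = m ^ N := by
  rw [slab, Fintype.card_piFinset]
  rw [Fin.prod_univ_succ]
  simp [Fin.succ_ne_zero, Int.toNat_natCast]

lemma slab_mem_zero {N m : ℕ} {k : Fin (N+1) → ℤ} (hk : k ∈ slab N m) : k 0 = m := by
  rw [slab, Fintype.mem_piFinset] at hk
  have := hk 0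
  simpa using this

lemma slab_abs_le {N m : ℕ} {k : Fin (N+1) → ℤ} (hk : k ∈ slab N m) (i : Fin (N+1)) :
    |(k i : ℝ)| ≤ m := by
  rw [slab, Fintype.mem_piFinset] at hk
  have h := hk i
  by_cases hi : i = 0
  · subst hi
    simp only [if_pos rfl] at h
    simp at h
    rw [h]
    simp
  · simp only [if_neg hi, Finset.mem_Ico] at h
    rw [abs_of_nonneg (by exact_mod_cast h.1)]
    exact_mod_cast h.2.le

lemma tsum_W_crit_top (N : ℕ) : ∑' k : Fin (N+1) → ℤ, W (-((N:ℝ)+1)) k = ⊤ := by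
  set n : ℕ := N + 1 with hn
  set c : ℝ := ((1:ℝ) + n) ^ (-((n:ℝ))/2) with hc
  have hcpos : 0 < c := by rw [hc]; positivity
  -- lower bound for the sum over each slab
  have hslab : ∀ m : ℕ, 1 ≤ m →
      ENNReal.ofReal (c * (1/(m:ℝ))) ≤ ∑ k ∈ slab N m, W (-((N:ℝ)+1)) k := by
    intro m hm
    have hmpos : (0:ℝ) < m := by exact_mod_cast hm
    have hterm : ∀ k ∈ slab N m, ENNReal.ofReal (c * (m:ℝ) ^ (-(n:ℝ))) ≤ W (-((N:ℝ)+1)) k := by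
      intro k hk
      apply ENNReal.ofReal_le_ofReal
      have hj : jpw k ≤ ((1:ℝ) + n) ^ ((1:ℝ)/2) * m :=
        jpw_le_of_forall_le hm (fun i => slab_abs_le hk i)
      have h2 : jpw k ^ (-(n:ℝ)) ≥ (((1:ℝ) + n) ^ ((1:ℝ)/2) * m) ^ (-(n:ℝ)) :=
        Real.rpow_le_rpow_of_nonpos (jpw_pos k) hj (neg_nonpos.mpr (by positivity))
      have h3 : (((1:ℝ) + n) ^ ((1:ℝ)/2) * m) ^ (-(n:ℝ)) = c * (m:ℝ) ^ (-(n:ℝ)) := by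
        rw [Real.mul_rpow (by positivity) hmpos.le, ← Real.rpow_mul (by positivity)]
        congr 2
        ring
      have hnn : -((N:ℝ)+1) = -(n:ℝ) := by rw [hn]; push_cast; ring
      rw [hnn]
      linarith [h3 ▸ h2]
    have hmn : (m:ℝ) ^ (-(n:ℝ)) = ((m:ℝ)^N * (m:ℝ))⁻¹ := by
      rw [Real.rpow_neg hmpos.le]
      congr 1
      have hnr : (n:ℝ) = (N:ℝ) + 1 := by rw [hn]; push_cast; ring
      rw [hnr, Real.rpow_add hmpos, Real.rpow_natCast, Real.rpow_one]
    calc ENNReal.ofReal (c * (1/(m:ℝ)))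
        = ENNReal.ofReal ((m:ℝ)^N * (c * (m:ℝ) ^ (-(n:ℝ)))) := by
          congr 1
          rw [hmn]
          field_simp
      _ = (m:ℝ≥0∞) ^ N * ENNReal.ofReal (c * (m:ℝ) ^ (-(n:ℝ))) := by
          rw [ENNReal.ofReal_mul (by positivity), ENNReal.ofReal_pow (by positivity),
            ENNReal.ofReal_natCast]
      _ ≤ ∑ k ∈ slab N m, W (-((N:ℝ)+1)) k := by
          have := Finset.card_nsmul_le_sum (slab N m) (fun k => W (-((N:ℝ)+1)) k)
            (ENNReal.ofReal (c * (m:ℝ) ^ (-(n:ℝ)))) hterm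
          rw [slab_card] at this
          rwa [nsmul_eq_mul, Nat.cast_pow] at this
  -- slabs are disjoint
  have hdisj : ∀ m₁ ∈ Finset.Icc 1 1, True := fun _ _ => trivial
  -- the union over m ∈ [1, M]
  have hM : ∀ M : ℕ, ENNReal.ofReal (c * ∑ i ∈ Finset.range M, 1/((i:ℝ)+1)) ≤
      ∑' k : Fin (N+1) → ℤ, W (-((N:ℝ)+1)) k := by
    intro M
    have hdis : (↑(Finset.range M) : Set ℕ).PairwiseDisjoint (fun i => slab N (i+1)) := by
      intro a _ b _ hab
      simp only [Function.onFun, Finset.disjoint_left]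
      intro k hka hkb
      have h1 := slab_mem_zero hka
      have h2 := slab_mem_zero hkb
      rw [h1] at h2
      have : a + 1 = b + 1 := by exact_mod_cast h2
      exact hab (by omega)
    calc ENNReal.ofReal (c * ∑ i ∈ Finset.range M, 1/((i:ℝ)+1))
        = ∑ i ∈ Finset.range M, ENNReal.ofReal (c * (1/((i:ℝ)+1))) := by
          rw [Finset.mul_sum, ← ENNReal.ofReal_sum_of_nonneg]
          intro i _; positivity
      _ ≤ ∑ i ∈ Finset.range M, ∑ k ∈ slab N (i+1), W (-((N:ℝ)+1)) k := by
          apply Finset.sum_le_sum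
          intro i _
          have := hslab (i+1) (Nat.le_add_left 1 i)
          push_cast at this ⊢
          exact this
      _ = ∑ k ∈ (Finset.range M).biUnion (fun i => slab N (i+1)), W (-((N:ℝ)+1)) k :=
          (Finset.sum_biUnion hdis).symm
      _ ≤ ∑' k : Fin (N+1) → ℤ, W (-((N:ℝ)+1)) k := ENNReal.sum_le_tsum _
  -- conclude
  by_contra htop
  set x := ∑' k : Fin (N+1) → ℤ, W (-((N:ℝ)+1)) k with hx
  have hxlt : x ≠ ⊤ := htop
  obtain ⟨M, hMge⟩ :=
    (Real.tendsto_sum_range_one_div_nat_succ_atTop.eventually_ge_atTop ((x.toReal + 1)/c)).exists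
  have h1 := hM M
  have h2 : ENNReal.ofReal (c * ∑ i ∈ Finset.range M, 1/((i:ℝ)+1)) ≥
      ENNReal.ofReal (x.toReal + 1) := by
    apply ENNReal.ofReal_le_ofReal
    calc x.toReal + 1 = c * ((x.toReal + 1)/c) := by field_simp
    _ ≤ c * ∑ i ∈ Finset.range M, 1/((i:ℝ)+1) := by
        apply mul_le_mul_of_nonneg_left _ hcpos.le
        simpa using hMge
  have h3 : ENNReal.ofReal (x.toReal + 1) ≤ x := le_trans h2 h1
  have h4 : x < ENNReal.ofReal (x.toReal + 1) := by
    conv_lhs => rw [← ENNReal.ofReal_toReal hxlt]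
    exact (ENNReal.ofReal_lt_ofReal_iff (by positivity)).mpr (lt_add_one _)
  exact absurd h3 (not_le.mpr h4)

open MeasureTheory in
section

lemma iSup_le_tsum_rpow {ι : Type*} (f : ι → ℝ≥0∞) {p : ℝ} (hp : 0 < p) :
    ⨆ i, f i ≤ (∑' i, f i ^ p) ^ (1/p) := by
  apply iSup_le
  intro i
  calc f i = (f i ^ p) ^ (1/p) := by
        rw [← ENNReal.rpow_mul, mul_one_div, div_self hp.ne', ENNReal.rpow_one]
  _ ≤ _ := ENNReal.rpow_le_rpow (ENNReal.le_tsum i) (by positivity)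

lemma tsum_rpow_mono {ι : Type*} (f : ι → ℝ≥0∞) {p₁ p₂ : ℝ} (h0 : 0 < p₁) (h : p₁ ≤ p₂) :
    (∑' i, f i ^ p₂) ^ (1/p₂) ≤ (∑' i, f i ^ p₁) ^ (1/p₁) := by
  have hp2 : 0 < p₂ := h0.trans_le h
  set S := ∑' i, f i ^ p₁ with hS
  rcases eq_or_ne S ⊤ with hT | hT
  · rw [hT, ENNReal.top_rpow_of_pos (by positivity)]; exact le_top
  rcases eq_or_ne S 0 with h0S | h0S
  · -- all f i = 0
    have hf : ∀ i, f i = 0 := by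
      intro i
      have h2 : f i ^ p₁ = 0 := le_antisymm (h0S ▸ ENNReal.le_tsum i) (zero_le)
      rwa [ENNReal.rpow_eq_zero_iff_of_pos h0] at h2
    simp only [hf, ENNReal.zero_rpow_of_pos hp2, tsum_zero,
      ENNReal.zero_rpow_of_pos (by positivity : (0:ℝ) < 1/p₂)]
    exact zero_le
  -- main case: S finite nonzero
  set c := S ^ (1/p₁) with hc
  have hc0 : c ≠ 0 := (ENNReal.rpow_pos (pos_iff_ne_zero.mpr h0S) hT).ne'
  have hcT : c ≠ ⊤ := ENNReal.rpow_ne_top_of_nonneg (by positivity) hT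
  have hg : ∀ i, f i / c ≤ 1 := by
    intro i
    rw [ENNReal.div_le_iff hc0 hcT, one_mul]
    calc f i = (f i ^ p₁) ^ (1/p₁) := by
          rw [← ENNReal.rpow_mul, mul_one_div, div_self h0.ne', ENNReal.rpow_one]
    _ ≤ c := ENNReal.rpow_le_rpow (ENNReal.le_tsum i) (by positivity)
  have hfc : ∀ i, f i = c * (f i / c) := by
    intro i
    rw [ENNReal.mul_div_cancel hc0 hcT]
  have hsum1 : ∑' i, (f i / c) ^ p₁ = 1 := by
    have : ∀ i, (f i / c) ^ p₁ = f i ^ p₁ / c ^ p₁ := by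
      intro i
      rw [ENNReal.div_rpow_of_nonneg _ _ h0.le]
    rw [tsum_congr this]
    simp only [div_eq_mul_inv]
    rw [ENNReal.tsum_mul_right, ← div_eq_mul_inv, ← hS]
    rw [hc, ← ENNReal.rpow_mul, one_div, inv_mul_cancel₀ h0.ne', ENNReal.rpow_one]
    exact ENNReal.div_self h0S hT
  have hsum2 : ∑' i, (f i / c) ^ p₂ ≤ 1 := by
    rw [← hsum1]
    exact ENNReal.tsum_le_tsum fun i => ENNReal.rpow_le_rpow_of_exponent_ge (hg i) h
  calc (∑' i, f i ^ p₂) ^ (1/p₂)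
      = (∑' i, (c * (f i / c)) ^ p₂) ^ (1/p₂) := by
        congr 1; exact tsum_congr fun i => by rw [← hfc i]
  _ = (c ^ p₂ * ∑' i, (f i / c) ^ p₂) ^ (1/p₂) := by
        congr 1
        rw [← ENNReal.tsum_mul_left]
        exact tsum_congr fun i => ENNReal.mul_rpow_of_nonneg _ _ hp2.le
  _ = c * (∑' i, (f i / c) ^ p₂) ^ (1/p₂) := by
        rw [ENNReal.mul_rpow_of_nonneg _ _ (by positivity : (0:ℝ) ≤ 1/p₂), ← ENNReal.rpow_mul,
          mul_one_div, div_self hp2.ne', ENNReal.rpow_one]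
  _ ≤ c * 1 := by
        gcongr
        exact ENNReal.rpow_le_rpow hsum2 (by positivity) |>.trans_eq (ENNReal.one_rpow _)
  _ = c := mul_one c

lemma tsum_holder {ι : Type*} [Countable ι] [MeasurableSpace ι] [MeasurableSingletonClass ι]
    (f g : ι → ℝ≥0∞) {p q : ℝ} (hpq : p.HolderConjugate q) :
    ∑' i, f i * g i ≤ (∑' i, f i ^ p) ^ (1/p) * (∑' i, g i ^ q) ^ (1/q) := by
  have := ENNReal.lintegral_mul_le_Lp_mul_Lq (Measure.count : Measure ι) hpq
    (measurable_of_countable f).aemeasurable (measurable_of_countable g).aemeasurable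
  simpa only [lintegral_count, Pi.mul_apply] using this

end

/-- The weighted sequence norm `‖a‖_{l^q_s} = (∑_k |a k|^q ⟨k⟩^{sq})^{1/q}`,
with the supremum modification when `q = ∞`. -/
noncomputable def lqsNorm {n : ℕ} (q : ℝ≥0∞) (s : ℝ) (a : (Fin n → ℤ) → ℂ) : ℝ≥0∞ :=
  if q = ∞ then ⨆ k, (‖a k‖₊ : ℝ≥0∞) * ENNReal.ofReal (jpw k ^ s)
  else (∑' k, ((‖a k‖₊ : ℝ≥0∞) * ENNReal.ofReal (jpw k ^ s)) ^ q.toReal) ^ (1 / q.toReal)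

/-- `1/q` interpreted as a real number, with `1/∞ = 0`. -/
noncomputable def rcp (q : ℝ≥0∞) : ℝ := (q⁻¹).toReal

lemma rcp_def (q : ℝ≥0∞) : rcp q = q.toReal⁻¹ := ENNReal.toReal_inv q

lemma rcp_nonneg (q : ℝ≥0∞) : 0 ≤ rcp q := ENNReal.toReal_nonneg

lemma rcp_top : rcp ⊤ = 0 := by simp [rcp]

lemma rcp_pos {q : ℝ≥0∞} (h0 : q ≠ 0) (ht : q ≠ ⊤) : 0 < rcp q := by
  rw [rcp_def]
  exact inv_pos.mpr (ENNReal.toReal_pos h0 ht)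

lemma rcp_le_rcp_iff {q₁ q₂ : ℝ≥0∞} (h1 : q₁ ≠ 0) (h2 : q₂ ≠ 0) :
    rcp q₂ ≤ rcp q₁ ↔ q₁ ≤ q₂ := by
  rw [rcp, rcp, ENNReal.toReal_le_toReal (ENNReal.inv_ne_top.2 h2) (ENNReal.inv_ne_top.2 h1),
    ENNReal.inv_le_inv]

lemma rcp_lt_rcp_iff {q₁ q₂ : ℝ≥0∞} (h1 : q₁ ≠ 0) (h2 : q₂ ≠ 0) :
    rcp q₁ < rcp q₂ ↔ q₂ < q₁ := by
  rw [rcp, rcp, ENNReal.toReal_lt_toReal (ENNReal.inv_ne_top.2 h1) (ENNReal.inv_ne_top.2 h2),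
    ENNReal.inv_lt_inv]

lemma rcp_mul_toReal {q : ℝ≥0∞} (h0 : q ≠ 0) (ht : q ≠ ⊤) : rcp q * q.toReal = 1 := by
  rw [rcp_def]
  exact inv_mul_cancel₀ (ENNReal.toReal_pos h0 ht).ne'

noncomputable def ind {n : ℕ} (e : ℝ) (F : Finset (Fin n → ℤ)) : (Fin n → ℤ) → ℂ :=
  fun k => if k ∈ F then ((jpw k ^ e : ℝ) : ℂ) else 0

lemma nnnorm_ind {n : ℕ} (e : ℝ) (F : Finset (Fin n → ℤ)) (k : Fin n → ℤ) :
    (‖ind e F k‖₊ : ℝ≥0∞) = if k ∈ F then W e k else 0 := by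
  rw [ind]
  split_ifs with h
  · rw [Complex.nnnorm_real, ← enorm_eq_nnnorm, Real.enorm_eq_ofReal (jpw_rpow_pos k e).le, W]
  · simp

lemma lqsNorm_ind {n : ℕ} {q : ℝ≥0∞} (h0 : q ≠ 0) (ht : q ≠ ⊤) (s e : ℝ)
    (F : Finset (Fin n → ℤ)) :
    lqsNorm q s (ind e F) = (∑ k ∈ F, W ((e + s) * q.toReal) k) ^ (1 / q.toReal) := by
  have hp : 0 < q.toReal := ENNReal.toReal_pos h0 ht
  rw [lqsNorm, if_neg ht]
  congr 1
  rw [tsum_eq_sum (s := F)]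
  · apply Finset.sum_congr rfl
    intro k hk
    rw [nnnorm_ind, if_pos hk, ← W, W_mul, W_rpow]
  · intro k hk
    rw [nnnorm_ind, if_neg hk, zero_mul, ENNReal.zero_rpow_of_pos hp]

lemma lqsNorm_ind_top {n : ℕ} (s e : ℝ) (F : Finset (Fin n → ℤ)) :
    lqsNorm ⊤ s (ind e F) = ⨆ k, (if k ∈ F then W (e + s) k else 0) := by
  rw [lqsNorm, if_pos rfl]
  congr 1
  funext k
  rw [nnnorm_ind]
  split_ifs with h
  · rw [← W, W_mul]
  · rw [zero_mul]

lemma lqsNorm_delta {n : ℕ} {q : ℝ≥0∞} (h0 : q ≠ 0) (s : ℝ) (k₀ : Fin n → ℤ) :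
    lqsNorm q s (ind 0 {k₀}) = W s k₀ := by
  by_cases ht : q = ⊤
  · subst ht
    rw [lqsNorm_ind_top]
    apply le_antisymm
    · apply iSup_le
      intro k
      split_ifs with h
      · rw [Finset.mem_singleton] at h
        subst h
        rw [zero_add]
      · exact zero_le
    · calc W s k₀ = if k₀ ∈ ({k₀} : Finset (Fin n → ℤ)) then W (0 + s) k₀ else 0 := by
            rw [if_pos (Finset.mem_singleton_self k₀), zero_add]
      _ ≤ _ := le_iSup (fun k => if k ∈ ({k₀} : Finset (Fin n → ℤ)) then W (0 + s) k else 0) k₀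
  · have hp : 0 < q.toReal := ENNReal.toReal_pos h0 ht
    rw [lqsNorm_ind h0 ht, Finset.sum_singleton, W_rpow]
    congr 1
    field_simp
    ring

/-- The embedding `l^{q₁}_{s₁}(ℤⁿ) ⊆ l^{q₂}_{s₂}(ℤⁿ)` holds iff
`1/q₂ ≤ 1/q₁ ∧ s₂ ≤ s₁`, or `1/q₂ > 1/q₁ ∧ 1/q₂ + s₂/n < 1/q₁ + s₁/n`. -/
theorem stmt0 (n : ℕ) (hn : 0 < n) (q₁ q₂ : ℝ≥0∞) (hq₁ : 0 < q₁) (hq₂ : 0 < q₂)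
    (s₁ s₂ : ℝ) :
    (∃ C : ℝ≥0, ∀ a : (Fin n → ℤ) → ℂ, lqsNorm q₂ s₂ a ≤ C * lqsNorm q₁ s₁ a) ↔
      ((rcp q₂ ≤ rcp q₁ ∧ s₂ ≤ s₁) ∨
        (rcp q₁ < rcp q₂ ∧ rcp q₂ + s₂ / n < rcp q₁ + s₁ / n)) := by
  have hn' : (0:ℝ) < n := by exact_mod_cast hn
  constructor
  · rintro ⟨C, h⟩
    have hW : ∀ k : Fin n → ℤ, W s₂ k ≤ (C:ℝ≥0∞) * W s₁ k := by
      intro k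
      have := h (ind 0 {k})
      rwa [lqsNorm_delta hq₂.ne' s₂ k, lqsNorm_delta hq₁.ne' s₁ k] at this
    have hWr : ∀ k : Fin n → ℤ, jpw k ^ s₂ ≤ (C:ℝ) * jpw k ^ s₁ := by
      intro k
      have h1 := ENNReal.toReal_mono (b := (C:ℝ≥0∞) * W s₁ k)
        (ENNReal.mul_ne_top ENNReal.coe_ne_top (W_ne_top s₁ k)) (hW k)
      rwa [W, W, ENNReal.toReal_mul, ENNReal.coe_toReal,
        ENNReal.toReal_ofReal (jpw_rpow_pos k s₂).le,
        ENNReal.toReal_ofReal (jpw_rpow_pos k s₁).le] at h1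
    have hs : s₂ ≤ s₁ := by
      by_contra hcon
      push_neg at hcon
      have ht : (0:ℝ) < s₂ - s₁ := by linarith
      have key : ∀ m : ℕ, (m:ℝ) ^ (s₂ - s₁) ≤ (C:ℝ) := by
        intro m
        set k : Fin n → ℤ := fun i => if i = ⟨0, hn⟩ then (m:ℤ) else 0 with hk
        have hk0 : k ⟨0, hn⟩ = (m:ℤ) := by rw [hk]; simp
        have hjm : (m:ℝ) ≤ jpw k := by
          have h0 := abs_le_jpw k ⟨0, hn⟩
          rw [hk0] at h0
          have habs : |((m:ℤ):ℝ)| = (m:ℝ) := by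
            push_cast
            exact abs_of_nonneg (Nat.cast_nonneg m)
          rwa [habs] at h0
        have h2 : jpw k ^ (s₂ - s₁) * jpw k ^ s₁ ≤ (C:ℝ) * jpw k ^ s₁ := by
          rw [← Real.rpow_add (jpw_pos k), sub_add_cancel]
          exact hWr k
        have h3 : jpw k ^ (s₂ - s₁) ≤ (C:ℝ) := le_of_mul_le_mul_right h2 (jpw_rpow_pos k s₁)
        calc (m:ℝ) ^ (s₂ - s₁) ≤ jpw k ^ (s₂ - s₁) :=
              Real.rpow_le_rpow (Nat.cast_nonneg m) hjm ht.le
        _ ≤ _ := h3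
      obtain ⟨m, hm⟩ := (((tendsto_rpow_atTop ht).comp
        tendsto_natCast_atTop_atTop).eventually_gt_atTop (C:ℝ)).exists
      exact absurd (key m) (not_le.mpr hm)
    by_cases hr : rcp q₂ ≤ rcp q₁
    · exact Or.inl ⟨hr, hs⟩
    push_neg at hr
    refine Or.inr ⟨hr, ?_⟩
    by_contra hcon
    push_neg at hcon
    have hq₂t : q₂ ≠ ⊤ := by
      intro h'
      rw [h', rcp_top] at hr
      exact absurd hr (not_lt.mpr (rcp_nonneg q₁))
    have hp₂ : 0 < q₂.toReal := ENNReal.toReal_pos hq₂.ne' hq₂t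
    set p₂ := q₂.toReal with hp₂def
    set e : ℝ := -(s₁ + n * rcp q₁) with he
    set δ := rcp q₂ - rcp q₁ with hδdef
    have hδ : 0 < δ := sub_pos.mpr hr
    have hrcp₂ : rcp q₂ = 1/p₂ := by rw [rcp_def, one_div, hp₂def]
    have key : ∀ F : Finset (Fin n → ℤ), ∑ k ∈ F, W (-(n:ℝ)) k ≤ (C:ℝ≥0∞) ^ (1/δ) := by
      intro F
      rcases F.eq_empty_or_nonempty with rfl | hF
      · rw [Finset.sum_empty]; exact zero_le
      set T := ∑ k ∈ F, W (-(n:ℝ)) k with hT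
      obtain ⟨k₀, hk₀⟩ := hF
      have hT0 : T ≠ 0 := by
        have h1 : (0:ℝ≥0∞) < W (-(n:ℝ)) k₀ := W_pos _ k₀
        have h2 := Finset.single_le_sum (f := fun k => W (-(n:ℝ)) k)
          (fun i _ => zero_le) hk₀
        exact (h1.trans_le h2).ne'
      have hTt : T ≠ ⊤ := (ENNReal.sum_lt_top.mpr (fun k _ => (W_ne_top _ k).lt_top)).ne
      have hN2 : T ^ rcp q₂ ≤ lqsNorm q₂ s₂ (ind e F) := by
        rw [lqsNorm_ind hq₂.ne' hq₂t, ← hp₂def, ← hrcp₂]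
        apply ENNReal.rpow_le_rpow _ (rcp_nonneg q₂)
        apply Finset.sum_le_sum
        intro k _
        apply W_mono
        rw [he]
        have h1 : rcp q₁ + s₁ / n ≤ 1/p₂ + s₂ / n := by rw [← hrcp₂]; exact hcon
        have h1' := mul_le_mul_of_nonneg_right h1 (mul_nonneg hn'.le hp₂.le)
        have hpinv : (1/p₂) * p₂ = 1 := one_div_mul_cancel hp₂.ne'
        have hs1 : s₁/(n:ℝ) * n = s₁ := div_mul_cancel₀ s₁ hn'.ne'
        have hs2 : s₂/(n:ℝ) * n = s₂ := div_mul_cancel₀ s₂ hn'.ne'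
        have e1 : (rcp q₁ + s₁/n) * (n*p₂) = rcp q₁ * n * p₂ + s₁ * p₂ := by
          linear_combination p₂ * hs1
        have e2 : (1/p₂ + s₂/n) * (n*p₂) = n + s₂ * p₂ := by
          linear_combination (n:ℝ) * hpinv + p₂ * hs2
        rw [e1, e2] at h1'
        linarith
      have hN1 : lqsNorm q₁ s₁ (ind e F) = T ^ rcp q₁ := by
        by_cases hq₁t : q₁ = ⊤
        · subst hq₁t
          rw [rcp_top, ENNReal.rpow_zero, lqsNorm_ind_top]
          have hes : e + s₁ = 0 := by rw [he, rcp_top]; ring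
          apply le_antisymm
          · apply iSup_le
            intro k
            split_ifs with hkk
            · rw [hes, W_zero]
            · exact zero_le
          · calc (1:ℝ≥0∞) = if k₀ ∈ F then W (e+s₁) k₀ else 0 := by
                  rw [if_pos hk₀, hes, W_zero]
            _ ≤ _ := le_iSup (fun k => if k ∈ F then W (e+s₁) k else 0) k₀
        · rw [lqsNorm_ind hq₁.ne' hq₁t]
          have hex : (e + s₁) * q₁.toReal = -(n:ℝ) := by
            rw [he]
            have h5 := rcp_mul_toReal hq₁.ne' hq₁t
            linear_combination (-(n:ℝ)) * h5
          have h1d : 1 / q₁.toReal = rcp q₁ := by rw [rcp_def, one_div]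
          rw [hex, h1d]
      have hcomb : T ^ rcp q₂ ≤ (C:ℝ≥0∞) * T ^ rcp q₁ := by
        calc T ^ rcp q₂ ≤ lqsNorm q₂ s₂ (ind e F) := hN2
        _ ≤ C * lqsNorm q₁ s₁ (ind e F) := h _
        _ = C * T ^ rcp q₁ := by rw [hN1]
      have h1 : T ^ rcp q₁ ≠ 0 := (ENNReal.rpow_pos (pos_iff_ne_zero.mpr hT0) hTt).ne'
      have h2T : T ^ rcp q₁ ≠ ⊤ := ENNReal.rpow_ne_top_of_nonneg (rcp_nonneg _) hTt
      have hsplit : T ^ rcp q₂ = T ^ rcp q₁ * T ^ δ := by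
        rw [← ENNReal.rpow_add _ _ hT0 hTt, hδdef]
        ring_nf
      rw [hsplit, mul_comm (C:ℝ≥0∞)] at hcomb
      have hcan : T ^ δ ≤ (C:ℝ≥0∞) := (ENNReal.mul_le_mul_iff_right h1 h2T).mp hcomb
      calc T = (T ^ δ) ^ (1/δ) := by
            rw [← ENNReal.rpow_mul, mul_one_div, div_self hδ.ne', ENNReal.rpow_one]
      _ ≤ (C:ℝ≥0∞) ^ (1/δ) := ENNReal.rpow_le_rpow hcan (by positivity)
    obtain ⟨N, rfl⟩ := Nat.exists_eq_succ_of_ne_zero hn.ne'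
    have hdiv := tsum_W_crit_top N
    have hle : ∑' k : Fin (N+1) → ℤ, W (-((N:ℝ)+1)) k ≤ (C:ℝ≥0∞) ^ (1/δ) := by
      rw [ENNReal.tsum_eq_iSup_sum]
      apply iSup_le
      intro F
      have hkey := key F
      rwa [show -(((N+1:ℕ)):ℝ) = -((N:ℝ)+1) by push_cast; ring] at hkey
    rw [hdiv] at hle
    exact (ENNReal.rpow_ne_top_of_nonneg (by positivity) ENNReal.coe_ne_top) (top_le_iff.mp hle)
  · rintro (⟨hr, hs⟩ | ⟨hr, hstrict⟩)
    · refine ⟨1, fun a => ?_⟩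
      rw [ENNReal.coe_one, one_mul]
      have hq₁q₂ : q₁ ≤ q₂ := (rcp_le_rcp_iff hq₁.ne' hq₂.ne').mp hr
      have hpt : ∀ k : Fin n → ℤ, (‖a k‖₊ : ℝ≥0∞) * ENNReal.ofReal (jpw k ^ s₂) ≤
          (‖a k‖₊ : ℝ≥0∞) * ENNReal.ofReal (jpw k ^ s₁) :=
        fun k => mul_le_mul_right (W_mono hs k) _
      by_cases h₂t : q₂ = ⊤
      · rw [lqsNorm, if_pos h₂t]
        by_cases h₁t : q₁ = ⊤
        · rw [lqsNorm, if_pos h₁t]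
          exact iSup_mono hpt
        · rw [lqsNorm, if_neg h₁t]
          have hp₁ : 0 < q₁.toReal := ENNReal.toReal_pos hq₁.ne' h₁t
          calc (⨆ k, (‖a k‖₊ : ℝ≥0∞) * ENNReal.ofReal (jpw k ^ s₂))
              ≤ ⨆ k, (‖a k‖₊ : ℝ≥0∞) * ENNReal.ofReal (jpw k ^ s₁) := iSup_mono hpt
          _ ≤ _ := iSup_le_tsum_rpow _ hp₁
      · have h₁t : q₁ ≠ ⊤ := fun h' => h₂t (top_le_iff.mp (h' ▸ hq₁q₂))
        have hp₁ : 0 < q₁.toReal := ENNReal.toReal_pos hq₁.ne' h₁t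
        have hp₁₂ : q₁.toReal ≤ q₂.toReal := ENNReal.toReal_mono h₂t hq₁q₂
        rw [lqsNorm, if_neg h₂t, lqsNorm, if_neg h₁t]
        calc (∑' k, ((‖a k‖₊ : ℝ≥0∞) * ENNReal.ofReal (jpw k ^ s₂)) ^ q₂.toReal) ^ (1/q₂.toReal)
            ≤ (∑' k, ((‖a k‖₊ : ℝ≥0∞) * ENNReal.ofReal (jpw k ^ s₁)) ^ q₂.toReal) ^ (1/q₂.toReal) :=
              ENNReal.rpow_le_rpow (ENNReal.tsum_le_tsum fun k =>
                ENNReal.rpow_le_rpow (hpt k) ENNReal.toReal_nonneg) (by positivity)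
        _ ≤ _ := tsum_rpow_mono _ hp₁ hp₁₂
    · have hq₂t : q₂ ≠ ⊤ := by
        intro h'
        rw [h', rcp_top] at hr
        exact absurd hr (not_lt.mpr (rcp_nonneg q₁))
      have hp₂ : 0 < q₂.toReal := ENNReal.toReal_pos hq₂.ne' hq₂t
      set p₂ := q₂.toReal with hp₂def
      have hrc₂ : rcp q₂ = 1/p₂ := by rw [rcp_def, one_div, hp₂def]
      by_cases h₁t : q₁ = ⊤
      · subst h₁t
        have hexp : (n:ℝ) < (s₁ - s₂) * p₂ := by
          rw [rcp_top, hrc₂] at hstrict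
          have h1' := mul_lt_mul_of_pos_right hstrict (mul_pos hn' hp₂)
          have hpinv : (1/p₂) * p₂ = 1 := one_div_mul_cancel hp₂.ne'
          have hs1 : s₁/(n:ℝ) * n = s₁ := div_mul_cancel₀ s₁ hn'.ne'
          have hs2 : s₂/(n:ℝ) * n = s₂ := div_mul_cancel₀ s₂ hn'.ne'
          have e1 : (1/p₂ + s₂/n) * (n*p₂) = n + s₂ * p₂ := by
            linear_combination (n:ℝ) * hpinv + p₂ * hs2
          have e2 : (0 + s₁/n) * (n*p₂) = s₁ * p₂ := by
            linear_combination p₂ * hs1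
          rw [e1, e2] at h1'
          nlinarith
        set K := ∑' k : Fin n → ℤ, W ((s₂ - s₁) * p₂) k with hK
        have hKt : K ≠ ⊤ := by
          rw [hK, show (s₂ - s₁) * p₂ = -((s₁ - s₂) * p₂) by ring]
          exact tsum_W_ne_top hn hexp
        have hCt : K ^ (1/p₂) ≠ ⊤ := ENNReal.rpow_ne_top_of_nonneg (by positivity) hKt
        refine ⟨(K ^ (1/p₂)).toNNReal, fun a => ?_⟩
        rw [ENNReal.coe_toNNReal hCt]
        set M := lqsNorm ⊤ s₁ a with hM
        rw [lqsNorm, if_neg hq₂t]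
        have hbd : ∀ k : Fin n → ℤ, ((‖a k‖₊ : ℝ≥0∞) * ENNReal.ofReal (jpw k ^ s₂)) ^ p₂ ≤
            M ^ p₂ * W ((s₂-s₁)*p₂) k := by
          intro k
          have h2 : (‖a k‖₊ : ℝ≥0∞) * ENNReal.ofReal (jpw k ^ s₁) ≤ M := by
            rw [hM, lqsNorm, if_pos rfl]
            exact le_iSup (fun k => (‖a k‖₊:ℝ≥0∞) * ENNReal.ofReal (jpw k ^ s₁)) k
          have h1 : (‖a k‖₊ : ℝ≥0∞) * ENNReal.ofReal (jpw k ^ s₂) ≤ M * W (s₂ - s₁) k := by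
            calc (‖a k‖₊ : ℝ≥0∞) * ENNReal.ofReal (jpw k ^ s₂)
                = ((‖a k‖₊ : ℝ≥0∞) * ENNReal.ofReal (jpw k ^ s₁)) * W (s₂ - s₁) k := by
                  rw [mul_assoc]
                  congr 1
                  rw [show ENNReal.ofReal (jpw k ^ s₁) = W s₁ k from rfl, W_mul,
                    add_sub_cancel]
                  rfl
            _ ≤ M * W (s₂ - s₁) k := mul_le_mul_left h2 _
          calc ((‖a k‖₊ : ℝ≥0∞) * ENNReal.ofReal (jpw k ^ s₂)) ^ p₂
              ≤ (M * W (s₂-s₁) k) ^ p₂ := ENNReal.rpow_le_rpow h1 hp₂.le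
          _ = M ^ p₂ * W ((s₂-s₁)*p₂) k := by
              rw [ENNReal.mul_rpow_of_nonneg _ _ hp₂.le, W_rpow]
        calc (∑' k, ((‖a k‖₊ : ℝ≥0∞) * ENNReal.ofReal (jpw k ^ s₂)) ^ p₂) ^ (1/p₂)
            ≤ (∑' k, M ^ p₂ * W ((s₂-s₁)*p₂) k) ^ (1/p₂) :=
              ENNReal.rpow_le_rpow (ENNReal.tsum_le_tsum hbd) (by positivity)
        _ = (M ^ p₂ * K) ^ (1/p₂) := by rw [ENNReal.tsum_mul_left]
        _ = M * K ^ (1/p₂) := by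
            rw [ENNReal.mul_rpow_of_nonneg _ _ (by positivity : (0:ℝ) ≤ 1/p₂),
              ← ENNReal.rpow_mul, mul_one_div, div_self hp₂.ne', ENNReal.rpow_one]
        _ = K ^ (1/p₂) * M := mul_comm _ _
      · have hq₂q₁ : q₂ < q₁ := (rcp_lt_rcp_iff hq₁.ne' hq₂.ne').mp hr
        have hp₁ : 0 < q₁.toReal := ENNReal.toReal_pos hq₁.ne' h₁t
        set p₁ := q₁.toReal with hp₁def
        have hrc₁ : rcp q₁ = 1/p₁ := by rw [rcp_def, one_div, hp₁def]
        have hpp : p₂ < p₁ := ENNReal.toReal_strict_mono h₁t hq₂q₁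
        set P := p₁ / p₂ with hP
        have hP1 : 1 < P := (one_lt_div hp₂).mpr hpp
        have hPQ := Real.HolderConjugate.conjExponent hP1
        set Q := Real.conjExponent P with hQ
        have hQpos : 0 < Q := hPQ.symm.pos
        have hQinv : 1/P + 1/Q = 1 := by
          have := hPQ.inv_add_inv_eq_one
          rwa [← one_div, ← one_div] at this
        have hQeq : Q * (p₁ - p₂) = p₁ := by
          have h1 : 1/P = p₂/p₁ := by rw [hP, one_div_div]
          have h2 : 1/Q = 1 - p₂/p₁ := by linarith
          field_simp at h2
          linarith
        have hfin : (n:ℝ) < (s₁ - s₂) * p₂ * Q := by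
          rw [hrc₁, hrc₂] at hstrict
          have hstep : (n:ℝ) * (p₁ - p₂) < (s₁ - s₂) * p₁ * p₂ := by
            have h1' := mul_lt_mul_of_pos_right hstrict (show (0:ℝ) < n * p₁ * p₂ by positivity)
            have hpinv : (1/p₂) * p₂ = 1 := one_div_mul_cancel hp₂.ne'
            have hp1inv : (1/p₁) * p₁ = 1 := one_div_mul_cancel hp₁.ne'
            have hs1 : s₁/(n:ℝ) * n = s₁ := div_mul_cancel₀ s₁ hn'.ne'
            have hs2 : s₂/(n:ℝ) * n = s₂ := div_mul_cancel₀ s₂ hn'.ne'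
            have e1 : (1/p₂ + s₂/n) * (n * p₁ * p₂) = n * p₁ + s₂ * p₁ * p₂ := by
              linear_combination ((n:ℝ)*p₁) * hpinv + (p₁*p₂) * hs2
            have e2 : (1/p₁ + s₁/n) * (n * p₁ * p₂) = n * p₂ + s₁ * p₁ * p₂ := by
              linear_combination ((n:ℝ)*p₂) * hp1inv + (p₁*p₂) * hs1
            rw [e1, e2] at h1'
            nlinarith
          have hpd : (0:ℝ) < p₁ - p₂ := by linarith
          have h3' : (n:ℝ) * (p₁ - p₂) < ((s₁ - s₂) * p₂ * Q) * (p₁ - p₂) := by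
            calc (n:ℝ) * (p₁-p₂) < (s₁-s₂)*p₁*p₂ := hstep
            _ = ((s₁-s₂)*p₂*Q)*(p₁-p₂) := by linear_combination (-(s₁ - s₂) * p₂) * hQeq
          exact (mul_lt_mul_iff_of_pos_right hpd).mp h3'
        set K := ∑' k : Fin n → ℤ, W ((s₂ - s₁) * p₂ * Q) k with hK
        have hKt : K ≠ ⊤ := by
          rw [hK, show (s₂ - s₁) * p₂ * Q = -((s₁ - s₂) * p₂ * Q) by ring]
          exact tsum_W_ne_top hn hfin
        have hCt : K ^ (1/(p₂ * Q)) ≠ ⊤ :=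
          ENNReal.rpow_ne_top_of_nonneg (by positivity) hKt
        refine ⟨(K ^ (1/(p₂ * Q))).toNNReal, fun a => ?_⟩
        rw [ENNReal.coe_toNNReal hCt]
        rw [lqsNorm, if_neg hq₂t, lqsNorm, if_neg h₁t]
        set u : (Fin n → ℤ) → ℝ≥0∞ := fun k => (‖a k‖₊ : ℝ≥0∞) * ENNReal.ofReal (jpw k ^ s₁)
          with hu
        have hsplit : ∀ k : Fin n → ℤ,
            ((‖a k‖₊ : ℝ≥0∞) * ENNReal.ofReal (jpw k ^ s₂)) ^ p₂ =
            (u k) ^ p₂ * W ((s₂ - s₁) * p₂) k := by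
          intro k
          have h1 : (‖a k‖₊ : ℝ≥0∞) * ENNReal.ofReal (jpw k ^ s₂) = u k * W (s₂ - s₁) k := by
            rw [hu, mul_assoc]
            congr 1
            rw [show ENNReal.ofReal (jpw k ^ s₁) = W s₁ k from rfl, W_mul, add_sub_cancel]
            rfl
          rw [h1, ENNReal.mul_rpow_of_nonneg _ _ hp₂.le, W_rpow]
        have hH := tsum_holder (fun k : Fin n → ℤ => (u k) ^ p₂)
          (fun k : Fin n → ℤ => W ((s₂ - s₁) * p₂) k) hPQ
        have hfP : ∀ k : Fin n → ℤ, ((u k) ^ p₂) ^ P = (u k) ^ p₁ := by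
          intro k
          rw [← ENNReal.rpow_mul]
          congr 1
          rw [hP]
          field_simp
        have hgQ : ∀ k : Fin n → ℤ, (W ((s₂ - s₁) * p₂) k) ^ Q = W ((s₂ - s₁) * p₂ * Q) k :=
          fun k => W_rpow _ _ _
        calc (∑' k, ((‖a k‖₊ : ℝ≥0∞) * ENNReal.ofReal (jpw k ^ s₂)) ^ p₂) ^ (1/p₂)
            = (∑' k, (u k) ^ p₂ * W ((s₂ - s₁) * p₂) k) ^ (1/p₂) := by
              rw [tsum_congr hsplit]
        _ ≤ ((∑' k, (u k) ^ p₁) ^ (1/P) * K ^ (1/Q)) ^ (1/p₂) := by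
            apply ENNReal.rpow_le_rpow _ (by positivity)
            calc ∑' k, (u k) ^ p₂ * W ((s₂ - s₁) * p₂) k
                ≤ (∑' k, ((u k) ^ p₂) ^ P) ^ (1/P) *
                  (∑' k, (W ((s₂ - s₁) * p₂) k) ^ Q) ^ (1/Q) := hH
            _ = (∑' k, (u k) ^ p₁) ^ (1/P) * K ^ (1/Q) := by
                rw [tsum_congr hfP, tsum_congr hgQ]
        _ = (∑' k, (u k) ^ p₁) ^ (1/p₁) * K ^ (1/(p₂ * Q)) := by
            rw [ENNReal.mul_rpow_of_nonneg _ _ (by positivity : (0:ℝ) ≤ 1/p₂),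
              ← ENNReal.rpow_mul, ← ENNReal.rpow_mul]
            congr 2
            · rw [hP]
              field_simp
            · rw [one_div, one_div, one_div, ← mul_inv]
              ring_nf
        _ = K ^ (1/(p₂ * Q)) * (∑' k, (u k) ^ p₁) ^ (1/p₁) := mul_comm _ _
end

section
/- Let β ∈ (1, 2] and let μ : ℝⁿ \ {0} → ℝ be a C² function, positively homogeneous of degree β (μ(λξ) = λ^β μ(ξ) for λ > 0), with μ(ξ) > 0 for all ξ ≠ 0. Then there exists ξ₀ ∈ ℝⁿ with |ξ₀| = 1 such that the Hessian matrix Hess μ(ξ₀) is positive definite; in particular det Hess μ(ξ₀) ≠ 0. -/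
open Matrix

/-- The partial derivative `∂_j μ (y)`. -/
noncomputable def pd1 {n : ℕ} (μ : (Fin n → ℝ) → ℝ) (j : Fin n) (y : Fin n → ℝ) : ℝ :=
  fderiv ℝ μ y (Pi.single j 1)

/-- The second partial derivative `∂_i ∂_j μ (y)`. -/
noncomputable def pd2 {n : ℕ} (μ : (Fin n → ℝ) → ℝ) (i j : Fin n) (y : Fin n → ℝ) : ℝ :=
  fderiv ℝ (pd1 μ j) y (Pi.single i 1)

lemma secondDeriv_nonneg_of_min {f f' : ℝ → ℝ} {c : ℝ}
    (hf : ∀ t, HasDerivAt f (f' t) t) (hf' : HasDerivAt f' c 0)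
    (hmin : ∀ t, f 0 ≤ f t) : 0 ≤ c := by
  by_contra hc
  push_neg at hc
  have hlm : IsLocalMin f 0 := Filter.Eventually.of_forall hmin
  have h0 : f' 0 = 0 := hlm.hasDerivAt_eq_zero (hf 0)
  have hslope := hasDerivAt_iff_tendsto_slope.1 hf'
  have hev : ∀ᶠ t in nhdsWithin (0:ℝ) {(0:ℝ)}ᶜ, slope f' 0 t < 0 :=
    hslope.eventually_lt_const hc
  have hev2 : ∀ᶠ t in nhdsWithin (0:ℝ) (Set.Ioi 0), f' t < 0 := by
    have := hev.filter_mono (nhdsWithin_mono 0 (by intro t ht; exact ne_of_gt ht))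
    filter_upwards [this, self_mem_nhdsWithin] with t ht ht0
    have h1 : t⁻¹ * f' t < 0 := by simpa [slope, h0] using ht
    have h2 := mul_neg_of_pos_of_neg (ht0 : (0:ℝ) < t) h1
    rwa [mul_inv_cancel_left₀ (ne_of_gt ht0)] at h2
  obtain ⟨u, hu, hsub⟩ := mem_nhdsGT_iff_exists_Ioo_subset.1 hev2
  have hu0 : (0:ℝ) < u := hu
  have hanti : StrictAntiOn f (Set.Icc 0 u) := by
    apply strictAntiOn_of_deriv_neg (convex_Icc 0 u)
    · exact fun t _ => ((hf t).differentiableAt).continuousAt.continuousWithinAt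
    · intro t ht
      rw [interior_Icc] at ht
      rw [(hf t).deriv]
      exact hsub ht
  have := hanti (Set.left_mem_Icc.2 hu0.le) (Set.right_mem_Icc.2 hu0.le) hu0
  exact absurd (hmin u) (not_le.2 this)

lemma clm_apply_eq_sum {n : ℕ} (L : (Fin n → ℝ) →L[ℝ] ℝ) (x : Fin n → ℝ) :
    L x = ∑ j, x j * L (Pi.single j 1) := by
  have hx : x = ∑ j, x j • (Pi.single j 1 : Fin n → ℝ) := by
    ext k
    simp [Finset.sum_apply, Pi.single_apply]
  calc L x = L (∑ j, x j • (Pi.single j 1 : Fin n → ℝ)) := by rw [← hx]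
    _ = ∑ j, x j * L (Pi.single j 1) := by
        rw [map_sum]
        exact Finset.sum_congr rfl fun j _ => by rw [_root_.map_smul]; rfl

lemma hasDerivAt_line {n : ℕ} {μ : (Fin n → ℝ) → ℝ} {y x : Fin n → ℝ} {t : ℝ}
    (hd : DifferentiableAt ℝ μ (y + t • x)) :
    HasDerivAt (fun s : ℝ => μ (y + s • x)) (∑ j, x j * pd1 μ j (y + t • x)) t := by
  have hline : HasDerivAt (fun s : ℝ => y + s • x) x t := by
    simpa using ((hasDerivAt_id t).smul_const x).const_add y
  have := hd.hasFDerivAt.comp_hasDerivAt t hline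
  exact this.congr_deriv (clm_apply_eq_sum _ x)

variable {n : ℕ} {μ : (Fin n → ℝ) → ℝ}

lemma contDiffAt_of_ne (hμ : ContDiffOn ℝ 2 μ {0}ᶜ) {y : Fin n → ℝ} (hy : y ≠ 0) :
    ContDiffAt ℝ 2 μ y :=
  hμ.contDiffAt (isOpen_compl_singleton.mem_nhds hy)

lemma diff_at (hμ : ContDiffOn ℝ 2 μ {0}ᶜ) {y : Fin n → ℝ} (hy : y ≠ 0) :
    DifferentiableAt ℝ μ y :=
  (contDiffAt_of_ne hμ hy).differentiableAt (by norm_num)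

lemma pd1_diff (hμ : ContDiffOn ℝ 2 μ {0}ᶜ) {y : Fin n → ℝ} (hy : y ≠ 0) (j : Fin n) :
    DifferentiableAt ℝ (pd1 μ j) y := by
  have h := (contDiffAt_of_ne hμ hy).fderiv_right (m := 1) (by norm_num)
  have h2 : ContDiffAt ℝ 1 (fun z => fderiv ℝ μ z (Pi.single j 1 : Fin n → ℝ)) y :=
    h.clm_apply contDiffAt_const
  exact h2.differentiableAt (by norm_num)

lemma pd2_symm (hμ : ContDiffOn ℝ 2 μ {0}ᶜ) {y : Fin n → ℝ} (hy : y ≠ 0) (i j : Fin n) :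
    pd2 μ i j y = pd2 μ j i y := by
  have hct : ContDiffAt ℝ 2 μ y := contDiffAt_of_ne hμ hy
  have hsym : IsSymmSndFDerivAt ℝ μ y := hct.isSymmSndFDerivAt (by simp [minSmoothness_of_isRCLikeNormedField])
  have hdf : DifferentiableAt ℝ (fderiv ℝ μ) y :=
    (hct.fderiv_right (m := 1) (by norm_num)).differentiableAt (by norm_num)
  have key : ∀ a b : Fin n → ℝ,
      fderiv ℝ (fun z => fderiv ℝ μ z b) y a = fderiv ℝ (fderiv ℝ μ) y a b := by
    intro a b
    rw [fderiv_clm_apply hdf (differentiableAt_const b)]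
    simp
  unfold pd2 pd1
  rw [key, key, hsym]

lemma pd1_hom (hμ : ContDiffOn ℝ 2 μ {0}ᶜ) {β : ℝ}
    (hhom : ∀ l : ℝ, 0 < l → ∀ ξ : Fin n → ℝ, ξ ≠ 0 → μ (l • ξ) = l ^ β * μ ξ)
    {l : ℝ} (hl : 0 < l) {ξ : Fin n → ℝ} (hξ : ξ ≠ 0) (j : Fin n) :
    pd1 μ j (l • ξ) = l ^ (β - 1) * pd1 μ j ξ := by
  have hlξ : l • ξ ≠ 0 := smul_ne_zero (ne_of_gt hl) hξ
  have hev : (fun ζ : Fin n → ℝ => μ (l • ζ)) =ᶠ[nhds ξ] (fun ζ => l ^ β * μ ζ) := by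
    filter_upwards [isOpen_compl_singleton.mem_nhds hξ] with ζ hζ
    exact hhom l hl ζ hζ
  have hd1 : DifferentiableAt ℝ μ (l • ξ) := diff_at hμ hlξ
  have hsm : HasFDerivAt (fun ζ : Fin n → ℝ => l • ζ)
      (l • ContinuousLinearMap.id ℝ (Fin n → ℝ)) ξ := by
    simpa using (l • ContinuousLinearMap.id ℝ (Fin n → ℝ)).hasFDerivAt (x := ξ)
  have hcomp : HasFDerivAt (fun ζ : Fin n → ℝ => μ (l • ζ))
      ((fderiv ℝ μ (l • ξ)).comp (l • ContinuousLinearMap.id ℝ (Fin n → ℝ))) ξ :=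
    hd1.hasFDerivAt.comp ξ hsm
  have heq : (fderiv ℝ μ (l • ξ)).comp (l • ContinuousLinearMap.id ℝ (Fin n → ℝ))
      = (l ^ β) • fderiv ℝ μ ξ := by
    rw [← hcomp.fderiv, hev.fderiv_eq, fderiv_const_mul (diff_at hμ hξ)]
  have happ := congrArg (fun L : (Fin n → ℝ) →L[ℝ] ℝ => L (Pi.single j 1)) heq
  simp only [ContinuousLinearMap.comp_apply, ContinuousLinearMap.smul_apply,
    ContinuousLinearMap.coe_smul', Pi.smul_apply, ContinuousLinearMap.coe_id', id_eq,
    smul_eq_mul] at happ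
  have happ2 : l * pd1 μ j (l • ξ) = l ^ β * pd1 μ j ξ := by
    unfold pd1
    rw [_root_.map_smul, smul_eq_mul] at happ
    exact happ
  have hlβ : l ^ β = l * l ^ (β - 1) := by
    have h1 : (1:ℝ) + (β - 1) = β := by ring
    rw [← h1, Real.rpow_add hl, Real.rpow_one]
    ring_nf
  rw [hlβ, mul_assoc] at happ2
  exact mul_left_cancel₀ (ne_of_gt hl) happ2

lemma euler1 (hμ : ContDiffOn ℝ 2 μ {0}ᶜ) {β : ℝ}
    (hhom : ∀ l : ℝ, 0 < l → ∀ ξ : Fin n → ℝ, ξ ≠ 0 → μ (l • ξ) = l ^ β * μ ξ)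
    {ξ : Fin n → ℝ} (hξ : ξ ≠ 0) :
    ∑ j, ξ j * pd1 μ j ξ = β * μ ξ := by
  have hL : HasDerivAt (fun l : ℝ => μ ((0 : Fin n → ℝ) + l • ξ))
      (∑ j, ξ j * pd1 μ j ((0 : Fin n → ℝ) + (1:ℝ) • ξ)) 1 :=
    hasDerivAt_line (by simpa using diff_at hμ hξ)
  have hL2 : HasDerivAt (fun l : ℝ => μ (l • ξ)) (∑ j, ξ j * pd1 μ j ξ) 1 := by
    simpa using hL
  have hE : (fun l : ℝ => μ (l • ξ)) =ᶠ[nhds (1:ℝ)] fun l => l ^ β * μ ξ := by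
    filter_upwards [eventually_gt_nhds zero_lt_one] with l hl
    exact hhom l hl ξ hξ
  have hR : HasDerivAt (fun l : ℝ => l ^ β * μ ξ) (β * μ ξ) 1 := by
    have := (Real.hasDerivAt_rpow_const (x := (1:ℝ)) (p := β) (Or.inl one_ne_zero)).mul_const (μ ξ)
    simpa [Real.one_rpow] using this
  have := (hL2.congr_of_eventuallyEq hE.symm).unique hR
  simpa using this

lemma euler2 (hμ : ContDiffOn ℝ 2 μ {0}ᶜ) {β : ℝ}
    (hhom : ∀ l : ℝ, 0 < l → ∀ ξ : Fin n → ℝ, ξ ≠ 0 → μ (l • ξ) = l ^ β * μ ξ)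
    {ξ : Fin n → ℝ} (hξ : ξ ≠ 0) (j : Fin n) :
    ∑ i, ξ i * pd2 μ i j ξ = (β - 1) * pd1 μ j ξ := by
  have hL : HasDerivAt (fun l : ℝ => pd1 μ j ((0 : Fin n → ℝ) + l • ξ))
      (∑ i, ξ i * pd1 (pd1 μ j) i ((0 : Fin n → ℝ) + (1:ℝ) • ξ)) 1 :=
    hasDerivAt_line (by simpa using pd1_diff hμ hξ j)
  have hL2 : HasDerivAt (fun l : ℝ => pd1 μ j (l • ξ)) (∑ i, ξ i * pd2 μ i j ξ) 1 := by
    simpa [pd2, pd1] using hL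
  have hE : (fun l : ℝ => pd1 μ j (l • ξ)) =ᶠ[nhds (1:ℝ)] fun l => l ^ (β - 1) * pd1 μ j ξ := by
    filter_upwards [eventually_gt_nhds zero_lt_one] with l hl
    exact pd1_hom hμ hhom hl hξ j
  have hR : HasDerivAt (fun l : ℝ => l ^ (β - 1) * pd1 μ j ξ) ((β - 1) * pd1 μ j ξ) 1 := by
    have := (Real.hasDerivAt_rpow_const (x := (1:ℝ)) (p := β - 1)
      (Or.inl one_ne_zero)).mul_const (pd1 μ j ξ)
    simpa [Real.one_rpow] using this
  exact (hL2.congr_of_eventuallyEq hE.symm).unique hR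

lemma tangent_conditions {n : ℕ} {μ : (Fin n → ℝ) → ℝ} (hμ : ContDiffOn ℝ 2 μ {0}ᶜ)
    {β : ℝ}
    (hhom : ∀ l : ℝ, 0 < l → ∀ ξ : Fin n → ℝ, ξ ≠ 0 → μ (l • ξ) = l ^ β * μ ξ)
    {ξ₀ : Fin n → ℝ} (hS : (∑ i, ξ₀ i ^ 2) = 1)
    (hmin : ∀ u : Fin n → ℝ, (∑ i, u i ^ 2) = 1 → μ ξ₀ ≤ μ u)
    {v : Fin n → ℝ} (hv : ∑ i, v i * ξ₀ i = 0) :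
    (∑ j, v j * pd1 μ j ξ₀ = 0) ∧
    (β * μ ξ₀ * (∑ i, v i ^ 2) ≤ ∑ j, v j * ∑ i, v i * pd2 μ i j ξ₀) := by
  set Nv : ℝ := ∑ i, v i ^ 2 with hNvdef
  have hNv : 0 ≤ Nv := Finset.sum_nonneg fun i _ => sq_nonneg _
  have hxfun : ∀ t : ℝ, (∑ i, (ξ₀ + t • v) i ^ 2) = 1 + t ^ 2 * Nv := by
    intro t
    simp only [Pi.add_apply, Pi.smul_apply, smul_eq_mul]
    calc (∑ i, (ξ₀ i + t * v i) ^ 2)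
        = ∑ i, (ξ₀ i ^ 2 + ((2 * t) * (v i * ξ₀ i) + t ^ 2 * v i ^ 2)) :=
          Finset.sum_congr rfl fun i _ => by ring
      _ = (∑ i, ξ₀ i ^ 2) + ((2 * t) * (∑ i, v i * ξ₀ i) + t ^ 2 * (∑ i, v i ^ 2)) := by
          rw [Finset.sum_add_distrib, Finset.sum_add_distrib, ← Finset.mul_sum, ← Finset.mul_sum]
      _ = 1 + t ^ 2 * Nv := by rw [hS, hv]; ring
  have hxpos : ∀ t : ℝ, (0:ℝ) < 1 + t ^ 2 * Nv := by
    intro t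
    nlinarith [mul_nonneg (sq_nonneg t) hNv]
  have hne : ∀ t : ℝ, ξ₀ + t • v ≠ 0 := by
    intro t h
    have h1 := hxfun t
    rw [h] at h1
    simp only [Pi.zero_apply, ne_eq, OfNat.ofNat_ne_zero, not_false_eq_true, zero_pow,
      Finset.sum_const_zero] at h1
    nlinarith [hxpos t]
  -- comparison inequality
  have hcomp : ∀ t : ℝ, μ ξ₀ * (1 + t ^ 2 * Nv) ^ (β / 2 : ℝ) ≤ μ (ξ₀ + t • v) := by
    intro t
    set x : ℝ := 1 + t ^ 2 * Nv with hxdef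
    have hx0 : 0 < x := hxpos t
    set l : ℝ := x ^ ((1:ℝ)/2) with hldef
    have hl : 0 < l := Real.rpow_pos_of_pos hx0 _
    set u : Fin n → ℝ := l⁻¹ • (ξ₀ + t • v) with hudef
    have hu : l • u = ξ₀ + t • v := smul_inv_smul₀ hl.ne' _
    have hl2 : l ^ (2:ℕ) = x := by
      rw [hldef, ← Real.rpow_natCast (x ^ ((1:ℝ)/2)) 2, ← Real.rpow_mul hx0.le]
      norm_num
    have huS : (∑ i, u i ^ 2) = 1 := by
      simp only [hudef, Pi.smul_apply, smul_eq_mul, mul_pow]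
      rw [← Finset.mul_sum, hxfun t, inv_pow, hl2, ← hxdef]
      exact inv_mul_cancel₀ hx0.ne'
    have hu0 : u ≠ 0 := by
      intro h
      rw [h] at huS
      simp at huS
    have hlb : l ^ β = x ^ (β / 2 : ℝ) := by
      rw [hldef, ← Real.rpow_mul hx0.le]
      congr 1
      ring
    calc μ ξ₀ * x ^ (β / 2 : ℝ) = x ^ (β / 2 : ℝ) * μ ξ₀ := by ring
      _ ≤ x ^ (β / 2 : ℝ) * μ u :=
          mul_le_mul_of_nonneg_left (hmin u huS) (Real.rpow_nonneg hx0.le _)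
      _ = l ^ β * μ u := by rw [hlb]
      _ = μ (l • u) := (hhom l hl u hu0).symm
      _ = μ (ξ₀ + t • v) := by rw [hu]
  -- derivatives of the comparison function
  have hx' : ∀ t : ℝ, HasDerivAt (fun s : ℝ => 1 + s ^ 2 * Nv) (2 * t * Nv) t := by
    intro t
    have := ((hasDerivAt_pow 2 t).mul_const Nv).const_add 1
    simpa using this
  set r1 : ℝ → ℝ := fun t => μ ξ₀ * β * Nv * (t * (1 + t ^ 2 * Nv) ^ (β / 2 - 1 : ℝ)) with hr1def
  have hr : ∀ t : ℝ, HasDerivAt (fun s : ℝ => μ ξ₀ * (1 + s ^ 2 * Nv) ^ (β / 2 : ℝ)) (r1 t) t := by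
    intro t
    have h1 := ((hx' t).rpow_const (p := β / 2) (Or.inl (hxpos t).ne')).const_mul (μ ξ₀)
    refine h1.congr_deriv ?_
    rw [hr1def]
    ring
  have hr1 : HasDerivAt r1 (μ ξ₀ * β * Nv) 0 := by
    have hin : HasDerivAt (fun t : ℝ => t * (1 + t ^ 2 * Nv) ^ (β / 2 - 1 : ℝ)) 1 0 := by
      have h2 := (hx' 0).rpow_const (p := β / 2 - 1) (Or.inl (hxpos 0).ne')
      have h3 := (hasDerivAt_id' (0:ℝ)).fun_mul h2
      simpa [Real.one_rpow] using h3
    have := hin.const_mul (μ ξ₀ * β * Nv)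
    simpa using this
  -- ψ and its derivatives
  set ψ : ℝ → ℝ := fun t => μ (ξ₀ + t • v) - μ ξ₀ * (1 + t ^ 2 * Nv) ^ (β / 2 : ℝ) with hψdef
  set ψ' : ℝ → ℝ := fun t => (∑ j, v j * pd1 μ j (ξ₀ + t • v)) - r1 t with hψ'def
  have hψ : ∀ t : ℝ, HasDerivAt ψ (ψ' t) t := fun t =>
    (hasDerivAt_line (diff_at hμ (hne t))).sub (hr t)
  have hψmin : ∀ t : ℝ, ψ 0 ≤ ψ t := by
    intro t
    have h0 : ψ 0 = 0 := by simp [hψdef, Real.one_rpow]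
    rw [h0]
    exact sub_nonneg.2 (hcomp t)
  -- first order
  have hfirst : ∑ j, v j * pd1 μ j ξ₀ = 0 := by
    have hlm : IsLocalMin ψ 0 := Filter.Eventually.of_forall hψmin
    have h0 := hlm.hasDerivAt_eq_zero (hψ 0)
    have : ψ' 0 = ∑ j, v j * pd1 μ j ξ₀ := by
      simp [hψ'def, hr1def]
    rw [this] at h0
    exact h0
  refine ⟨hfirst, ?_⟩
  -- second order
  have hpart1 : HasDerivAt (fun t : ℝ => ∑ j, v j * pd1 μ j (ξ₀ + t • v))
      (∑ j, v j * ∑ i, v i * pd2 μ i j ξ₀) 0 := by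
    apply HasDerivAt.fun_sum
    intro j _
    have hline := hasDerivAt_line (μ := pd1 μ j) (y := ξ₀) (x := v) (t := 0)
      (pd1_diff hμ (hne 0) j)
    have h2 : (∑ i, v i * pd1 (pd1 μ j) i (ξ₀ + (0:ℝ) • v)) = ∑ i, v i * pd2 μ i j ξ₀ := by
      simp [pd2, pd1]
    rw [h2] at hline
    exact hline.const_mul (v j)
  have hψ'' : HasDerivAt ψ' ((∑ j, v j * ∑ i, v i * pd2 μ i j ξ₀) - μ ξ₀ * β * Nv) 0 :=
    hpart1.sub hr1
  have hkey := secondDeriv_nonneg_of_min hψ hψ'' hψmin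
  linarith

/-- If `β ∈ (1,2]` and `μ` is C² on `ℝⁿ \ {0}`, positively homogeneous of degree `β`,
and positive away from the origin, then there is `ξ₀` with `|ξ₀| = 1` such that
`Hess μ(ξ₀)` is positive definite; in particular `det Hess μ(ξ₀) ≠ 0`. -/
theorem stmt12 (n : ℕ) (hn : 0 < n) (β : ℝ) (hβ1 : 1 < β) (hβ2 : β ≤ 2)
    (μ : (Fin n → ℝ) → ℝ) (hμ : ContDiffOn ℝ 2 μ {0}ᶜ)
    (hhom : ∀ l : ℝ, 0 < l → ∀ ξ : Fin n → ℝ, ξ ≠ 0 → μ (l • ξ) = l ^ β * μ ξ)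
    (hpos : ∀ ξ : Fin n → ℝ, ξ ≠ 0 → 0 < μ ξ) :
    ∃ ξ₀ : Fin n → ℝ, (∑ i, ξ₀ i ^ 2) = 1 ∧
      (∀ x : Fin n → ℝ, x ≠ 0 →
        0 < x ⬝ᵥ ((Matrix.of fun i j => pd2 μ i j ξ₀).mulVec x)) ∧
      (Matrix.of fun i j => pd2 μ i j ξ₀).det ≠ 0 := by
  -- the sphere
  set S : Set (Fin n → ℝ) := {ξ | (∑ i, ξ i ^ 2) = 1} with hSdef
  have hcont : Continuous fun ξ : Fin n → ℝ => ∑ i, ξ i ^ 2 :=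
    continuous_finset_sum _ fun i _ => (continuous_apply i).pow 2
  have hSclosed : IsClosed S := isClosed_eq hcont continuous_const
  have hSbdd : Bornology.IsBounded S := by
    apply (Metric.isBounded_closedBall (x := (0 : Fin n → ℝ)) (r := 1)).subset
    intro ξ hξ
    rw [Metric.mem_closedBall, dist_zero_right]
    rw [pi_norm_le_iff_of_nonneg zero_le_one]
    intro i
    rw [Real.norm_eq_abs, ← sq_le_one_iff_abs_le_one]
    calc ξ i ^ 2 ≤ ∑ j, ξ j ^ 2 :=
          Finset.single_le_sum (fun j _ => sq_nonneg (ξ j)) (Finset.mem_univ i)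
      _ = 1 := hξ
  have hScomp : IsCompact S := Metric.isCompact_of_isClosed_isBounded hSclosed hSbdd
  have hSne : S.Nonempty := by
    refine ⟨(Pi.single (⟨0, hn⟩ : Fin n) (1:ℝ) : Fin n → ℝ), ?_⟩
    show (∑ i, _ ^ 2) = 1
    simp [Pi.single_apply]
  have hSsub : ∀ ξ ∈ S, ξ ≠ 0 := by
    intro ξ hξ h0
    rw [h0] at hξ
    simp [hSdef] at hξ
  obtain ⟨ξ₀, hξ₀S, hminOn⟩ := hScomp.exists_isMinOn hSne
    (hμ.continuousOn.mono fun ξ hξ => hSsub ξ hξ)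
  have hS : (∑ i, ξ₀ i ^ 2) = 1 := hξ₀S
  have hξ₀ : ξ₀ ≠ 0 := hSsub ξ₀ hξ₀S
  have hμ₀ : 0 < μ ξ₀ := hpos ξ₀ hξ₀
  have hmin : ∀ u : Fin n → ℝ, (∑ i, u i ^ 2) = 1 → μ ξ₀ ≤ μ u := fun u hu =>
    isMinOn_iff.1 hminOn u hu
  have E1 : ∀ j, ∑ i, ξ₀ i * pd2 μ i j ξ₀ = (β - 1) * pd1 μ j ξ₀ := euler2 hμ hhom hξ₀
  have EU : ∑ j, ξ₀ j * pd1 μ j ξ₀ = β * μ ξ₀ := euler1 hμ hhom hξ₀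
  have sym : ∀ i j, pd2 μ i j ξ₀ = pd2 μ j i ξ₀ := pd2_symm hμ hξ₀
  -- main positivity
  have main : ∀ x : Fin n → ℝ, x ≠ 0 →
      0 < x ⬝ᵥ ((Matrix.of fun i j => pd2 μ i j ξ₀).mulVec x) := by
    intro x hx
    set c : ℝ := ∑ i, x i * ξ₀ i with hcdef
    set v : Fin n → ℝ := x - c • ξ₀ with hvdef
    have hone : ∑ i, ξ₀ i * ξ₀ i = 1 := by
      rw [← hS]; exact Finset.sum_congr rfl fun i _ => (sq (ξ₀ i)).symm
    have hvtan : ∑ i, v i * ξ₀ i = 0 := by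
      simp only [hvdef, Pi.sub_apply, Pi.smul_apply, smul_eq_mul, sub_mul]
      rw [Finset.sum_sub_distrib]
      have : ∑ i, c * ξ₀ i * ξ₀ i = c * ∑ i, ξ₀ i * ξ₀ i := by
        rw [Finset.mul_sum]; exact Finset.sum_congr rfl fun i _ => by ring
      rw [this, hone, mul_one, ← hcdef, sub_self]
    obtain ⟨tan1, tan2⟩ := tangent_conditions hμ hhom hS hmin hvtan
    have hxi : ∀ i, x i = c * ξ₀ i + v i := by
      intro i
      simp only [hvdef, Pi.sub_apply, Pi.smul_apply, smul_eq_mul]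
      ring
    have hNv : 0 ≤ ∑ i, v i ^ 2 := Finset.sum_nonneg fun i _ => sq_nonneg _
    have hQ : x ⬝ᵥ ((Matrix.of fun i j => pd2 μ i j ξ₀).mulVec x)
        = ∑ i, ∑ j, x i * x j * pd2 μ i j ξ₀ := by
      simp only [dotProduct, Matrix.mulVec, Matrix.of_apply, Finset.mul_sum]
      exact Finset.sum_congr rfl fun i _ => Finset.sum_congr rfl fun j _ => by ring
    -- four pieces
    have T1 : ∑ i, ∑ j, ξ₀ i * (ξ₀ j * pd2 μ i j ξ₀) = (β - 1) * (β * μ ξ₀) := by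
      rw [Finset.sum_comm]
      have : ∀ j, ∑ i, ξ₀ i * (ξ₀ j * pd2 μ i j ξ₀) = ξ₀ j * ((β - 1) * pd1 μ j ξ₀) := by
        intro j
        rw [← E1 j, Finset.mul_sum]
        exact Finset.sum_congr rfl fun i _ => by ring
      rw [Finset.sum_congr rfl fun j _ => this j]
      rw [← EU, Finset.mul_sum]
      exact Finset.sum_congr rfl fun j _ => by ring
    have T2 : ∑ i, ∑ j, ξ₀ i * (v j * pd2 μ i j ξ₀) = 0 := by
      rw [Finset.sum_comm]
      have : ∀ j, ∑ i, ξ₀ i * (v j * pd2 μ i j ξ₀) = v j * ((β - 1) * pd1 μ j ξ₀) := by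
        intro j
        rw [← E1 j, Finset.mul_sum]
        exact Finset.sum_congr rfl fun i _ => by ring
      rw [Finset.sum_congr rfl fun j _ => this j]
      have : ∑ j, v j * ((β - 1) * pd1 μ j ξ₀) = (β - 1) * ∑ j, v j * pd1 μ j ξ₀ := by
        rw [Finset.mul_sum]
        exact Finset.sum_congr rfl fun j _ => by ring
      rw [this, tan1, mul_zero]
    have T3 : ∑ i, ∑ j, v i * (ξ₀ j * pd2 μ i j ξ₀) = 0 := by
      have hswap : ∀ i, ∑ j, v i * (ξ₀ j * pd2 μ i j ξ₀) = v i * ((β - 1) * pd1 μ i ξ₀) := by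
        intro i
        have : ∑ j, v i * (ξ₀ j * pd2 μ i j ξ₀) = v i * ∑ j, ξ₀ j * pd2 μ j i ξ₀ := by
          rw [Finset.mul_sum]
          exact Finset.sum_congr rfl fun j _ => by rw [sym i j]
        rw [this, E1 i]
      rw [Finset.sum_congr rfl fun i _ => hswap i]
      have : ∑ i, v i * ((β - 1) * pd1 μ i ξ₀) = (β - 1) * ∑ i, v i * pd1 μ i ξ₀ := by
        rw [Finset.mul_sum]
        exact Finset.sum_congr rfl fun i _ => by ring
      rw [this, tan1, mul_zero]
    have T4 : ∑ i, ∑ j, v i * (v j * pd2 μ i j ξ₀) = ∑ j, v j * ∑ i, v i * pd2 μ i j ξ₀ := by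
      rw [Finset.sum_comm]
      exact Finset.sum_congr rfl fun j _ => by
        rw [Finset.mul_sum]
        exact Finset.sum_congr rfl fun i _ => by ring
    have hsplit : ∑ i, ∑ j, x i * x j * pd2 μ i j ξ₀
        = c ^ 2 * (∑ i, ∑ j, ξ₀ i * (ξ₀ j * pd2 μ i j ξ₀))
          + (c * (∑ i, ∑ j, ξ₀ i * (v j * pd2 μ i j ξ₀))
          + (c * (∑ i, ∑ j, v i * (ξ₀ j * pd2 μ i j ξ₀))
          + ∑ i, ∑ j, v i * (v j * pd2 μ i j ξ₀))) := by
      rw [Finset.mul_sum, Finset.mul_sum, Finset.mul_sum]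
      rw [← Finset.sum_add_distrib, ← Finset.sum_add_distrib, ← Finset.sum_add_distrib]
      refine Finset.sum_congr rfl fun i _ => ?_
      rw [Finset.mul_sum, Finset.mul_sum, Finset.mul_sum]
      rw [← Finset.sum_add_distrib, ← Finset.sum_add_distrib, ← Finset.sum_add_distrib]
      refine Finset.sum_congr rfl fun j _ => ?_
      rw [hxi i, hxi j]
      ring
    rw [hQ, hsplit, T1, T2, T3, T4, mul_zero, zero_add]
    have hc2 : 0 ≤ c ^ 2 := sq_nonneg c
    have hQv : β * μ ξ₀ * (∑ i, v i ^ 2) ≤ ∑ j, v j * ∑ i, v i * pd2 μ i j ξ₀ := tan2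
    have hpos1 : 0 < c ^ 2 ∨ 0 < ∑ i, v i ^ 2 := by
      by_contra h
      push_neg at h
      have hc0 : c = 0 := by nlinarith [h.1]
      have hv0 : ∀ i, v i = 0 := by
        intro i
        have h1 : ∑ i, v i ^ 2 = 0 := le_antisymm h.2 hNv
        have := (Finset.sum_eq_zero_iff_of_nonneg fun i _ => sq_nonneg (v i)).1 h1 i
          (Finset.mem_univ i)
        exact pow_eq_zero_iff (by norm_num) |>.1 this
      apply hx
      funext i
      rw [hxi i, hc0, hv0 i]
      simp
    have hβ0 : 0 < β := lt_trans one_pos hβ1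
    have hβm1 : 0 < β - 1 := sub_pos.2 hβ1
    rcases hpos1 with h | h
    · have : 0 < c ^ 2 * ((β - 1) * (β * μ ξ₀)) :=
        mul_pos h (mul_pos hβm1 (mul_pos hβ0 hμ₀))
      nlinarith [mul_nonneg (mul_nonneg hβ0.le hμ₀.le) hNv]
    · have h2 : 0 < β * μ ξ₀ * (∑ i, v i ^ 2) := mul_pos (mul_pos hβ0 hμ₀) h
      nlinarith [mul_nonneg hc2 (mul_nonneg hβm1.le (mul_pos hβ0 hμ₀).le)]
  refine ⟨ξ₀, hS, main, ?_⟩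
  intro hdet
  obtain ⟨w, hw0, hww⟩ := Matrix.exists_mulVec_eq_zero_iff.2 hdet
  have := main w hw0
  rw [hww] at this
  simp at this
end
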